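/- Fix ε ∈ (0, 1) and M ≥ exp(2/ε) (M a positive integer). Let θ i = 1 and c i = 2i - 1 for i = 1, …, M. Then (a) for every nonempty subset S ⊆ {1,…,M}, (∑_{i ∈ S} θ i ^ 2)^2 ≤ ∑_{i ∈ S} c i, with equality when S = {1,…,m} is a prefix; (b) θ i ^ 4 ≤ c i for all i; and (c) ∑_{i=1}^M ε / (2i - 1 + 1 - ε) ≥ 1, i.e. f(1-ε) ≥ 1 where f(x) = ∑_i (1-x)/(2i-1 + x), so the unique root x⋆ of f(x) = 1 in (0,1) satisfies x⋆ ≥ 1 - ε. -/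

import Mathlib

lemma sum_odd_ge (S : Finset ℕ) : S.card ^ 2 ≤ ∑ i ∈ S, (2 * i + 1) := by
  induction S using Finset.induction_on_max with
  | empty => simp
  | insert a s ha ih =>
    rw [Finset.sum_insert (fun h => lt_irrefl a (ha a h)),
      Finset.card_insert_of_notMem (fun h => lt_irrefl a (ha a h))]
    have hs : s.card ≤ a := by
      have : s ⊆ Finset.range a := fun x hx => Finset.mem_range.2 (ha x hx)
      simpa using Finset.card_le_card this
    nlinarith

lemma sum_odd_range (m : ℕ) : ∑ i ∈ Finset.range m, (2 * i + 1) = m ^ 2 := by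
  induction m with
  | zero => simp
  | succ n ih => rw [Finset.sum_range_succ, ih]; ring

theorem stmt_15 (ε : ℝ) (hε : 0 < ε ∧ ε < 1) (M : ℕ)
    (hM : Real.exp (2 / ε) ≤ (M : ℝ))
    (θ c : Fin M → ℝ) (hθ : ∀ i, θ i = 1)
    (hc : ∀ i, c i = 2 * ((i : ℕ) + 1) - 1) :
    (∀ S : Finset (Fin M), (∑ i ∈ S, θ i ^ 2) ^ 2 ≤ ∑ i ∈ S, c i) ∧
    (∀ m : ℕ, m ≤ M →
      (∑ i ∈ Finset.univ.filter (fun i : Fin M => (i : ℕ) < m), θ i ^ 2) ^ 2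
        = ∑ i ∈ Finset.univ.filter (fun i : Fin M => (i : ℕ) < m), c i) ∧
    (∀ i, θ i ^ 4 ≤ c i) ∧
    (1 ≤ ∑ i, ε / (c i + 1 - ε)) ∧
    (∀ x ∈ Set.Ioo (0 : ℝ) 1,
      (∑ i, θ i ^ 4 * (1 - x) / (c i + x * θ i ^ 2)) = 1 → 1 - ε ≤ x) := by
  obtain ⟨hε0, hε1⟩ := hε
  have hcval : ∀ i : Fin M, c i = 2 * (i : ℕ) + 1 := by
    intro i; rw [hc i]; ring
  have hsumc : ∀ S : Finset (Fin M), ∑ i ∈ S, c i =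
      ((∑ j ∈ S.image (Fin.val), (2 * j + 1) : ℕ) : ℝ) := by
    intro S
    rw [Finset.sum_image (fun a _ b _ h => Fin.val_injective h)]
    push_cast
    exact Finset.sum_congr rfl fun i _ => by simp [hcval i]
  have hθ2 : ∀ i : Fin M, θ i ^ 2 = 1 := fun i => by rw [hθ i]; ring
  have hM1 : (1:ℝ) < (M:ℝ) := by
    have h0 : Real.exp 0 < Real.exp (2 / ε) := Real.exp_lt_exp.2 (by positivity)
    rw [Real.exp_zero] at h0
    linarith
  have hMpos : 0 < M := by exact_mod_cast lt_trans zero_lt_one hM1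
  have hpart4 : (1:ℝ) ≤ ∑ i, ε / (c i + 1 - ε) := by
    have hlog : 2 / ε ≤ Real.log M := (Real.le_log_iff_exp_le (by linarith)).2 hM
    have step1 : ∀ i : Fin M, ε / 2 * (((i:ℕ):ℝ) + 1)⁻¹ ≤ ε / (c i + 1 - ε) := by
      intro i
      rw [hcval i]
      have h2 : (0:ℝ) < ((i:ℕ):ℝ) + 1 := by positivity
      have h3 : (0:ℝ) < 2 * ((i:ℕ):ℝ) + 1 + 1 - ε := by nlinarith
      have key : ε / 2 * (((i:ℕ):ℝ)+1)⁻¹ = ε / (2*((i:ℕ):ℝ)+2) := by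
        rw [← div_eq_mul_inv, div_div]; ring_nf
      rw [key]
      gcongr
      linarith
    have hharm : ((harmonic M : ℚ) : ℝ) = ∑ i : Fin M, (((i:ℕ):ℝ) + 1)⁻¹ := by
      rw [harmonic, Finset.sum_fin_eq_sum_range]
      push_cast
      refine Finset.sum_congr rfl fun i hi => ?_
      rw [dif_pos (Finset.mem_range.1 hi)]
    have hlogharm : Real.log (M + 1) ≤ ((harmonic M : ℚ) : ℝ) := by
      exact_mod_cast log_add_one_le_harmonic M
    have hlogM : Real.log M ≤ Real.log (M + 1) :=
      Real.log_le_log (by positivity) (by linarith)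
    calc (1:ℝ) = ε / 2 * (2 / ε) := by field_simp
      _ ≤ ε / 2 * Real.log M := by
          apply mul_le_mul_of_nonneg_left hlog (by positivity)
      _ ≤ ε / 2 * ∑ i : Fin M, (((i:ℕ):ℝ) + 1)⁻¹ := by
          apply mul_le_mul_of_nonneg_left _ (by positivity)
          rw [← hharm]; linarith
      _ = ∑ i : Fin M, ε / 2 * (((i:ℕ):ℝ) + 1)⁻¹ := Finset.mul_sum _ _ _
      _ ≤ _ := Finset.sum_le_sum fun i _ => step1 i
  refine ⟨?_, ?_, ?_, hpart4, ?_⟩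
  · intro S
    have h1 : (∑ i ∈ S, θ i ^ 2) = (S.card : ℝ) := by simp [hθ2]
    rw [h1, hsumc S]
    have hcard : (S.image Fin.val).card = S.card :=
      Finset.card_image_of_injective _ Fin.val_injective
    have := sum_odd_ge (S.image Fin.val)
    rw [hcard] at this
    calc ((S.card : ℝ)) ^ 2 = ((S.card ^ 2 : ℕ) : ℝ) := by push_cast; ring
      _ ≤ _ := by exact_mod_cast this
  · intro m hm
    set S := Finset.univ.filter (fun i : Fin M => (i : ℕ) < m) with hS
    have himg : S.image Fin.val = Finset.range m := by
      ext j
      simp only [hS, Finset.mem_image, Finset.mem_filter, Finset.mem_univ, true_and,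
        Finset.mem_range]
      constructor
      · rintro ⟨i, hi, rfl⟩; exact hi
      · intro hj; exact ⟨⟨j, lt_of_lt_of_le hj hm⟩, hj, rfl⟩
    have hcard : S.card = m := by
      rw [← Finset.card_range m, ← himg,
        Finset.card_image_of_injective _ Fin.val_injective]
    have h1 : (∑ i ∈ S, θ i ^ 2) = (m : ℝ) := by simp [hθ2, hcard]
    rw [h1, hsumc S, himg, sum_odd_range]
    push_cast; ring
  · intro i
    rw [hθ i, hcval i]
    have : (0:ℝ) ≤ ((i:ℕ):ℝ) := by positivity
    nlinarith
  · intro x hx hfx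
    obtain ⟨hx0, hx1⟩ := hx
    by_contra hlt
    push_neg at hlt
    have hstrict : ∀ i : Fin M, ε / (c i + 1 - ε) <
        θ i ^ 4 * (1 - x) / (c i + x * θ i ^ 2) := by
      intro i
      rw [hθ i, hcval i]
      have h2 : (0:ℝ) ≤ ((i:ℕ):ℝ) := by positivity
      have hA : (0:ℝ) < 2 * (i:ℕ) + 1 + 1 - ε := by nlinarith
      have hB : (0:ℝ) < 2 * (i:ℕ) + 1 + x * 1 ^ 2 := by nlinarith
      rw [div_lt_div_iff₀ hA hB]
      nlinarith
    have : (1:ℝ) < ∑ i, θ i ^ 4 * (1 - x) / (c i + x * θ i ^ 2) := by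
      calc (1:ℝ) ≤ ∑ i, ε / (c i + 1 - ε) := hpart4
        _ < _ := Finset.sum_lt_sum_of_nonempty
            (Finset.univ_nonempty_iff.2 (Fin.pos_iff_nonempty.1 hMpos) |>.mono (by simp)) -- fix
            (fun i _ => hstrict i)
    linarith [hfx ▸ this]
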